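/- Let A be an integral domain that is finitely generated as a ℤ-algebra and whose field of fractions is a number field (a finite extension of ℚ). Then the set of prime ideals 𝔭 of A such that the quotient A/𝔭 is a finite field of prime cardinality is an infinite set, and this set of points is dense in PrimeSpectrum A. -/

import Mathlib

open Polynomial in
lemma schur_infinite (f : Polynomial ℤ) (hf : 1 ≤ f.natDegree) :
    {p : ℕ | p.Prime ∧ ∃ n : ℤ, (p : ℤ) ∣ f.eval n}.Infinite := by
  by_contra hfin
  rw [Set.not_infinite] at hfin
  by_cases hc : f.eval 0 = 0
  · refine Nat.infinite_setOf_prime (hfin.subset fun p hp => ⟨hp, 0, by simp [hc]⟩)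
  · set c := f.eval 0 with hc0
    set N : ℤ := ∏ p ∈ hfin.toFinset, (p : ℤ) with hN
    have hNpos : 0 < N := Finset.prod_pos fun p hp => by
      exact_mod_cast (hfin.mem_toFinset.mp hp).1.pos
    have hroots : ∀ v : ℤ, {x : ℤ | f.eval x = v}.Finite := by
      intro v
      have hfv : f - C v ≠ 0 := by
        intro h
        have : f = C v := by linear_combination (norm := ring_nf) h
        rw [this, natDegree_C] at hf; omega
      refine (Polynomial.finite_setOf_isRoot hfv).subset fun x hx => ?_
      simp only [Set.mem_setOf_eq, IsRoot, eval_sub, eval_C] at *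
      omega
    have hB : {m : ℤ | f.eval (c * N * m) = -c ∨ f.eval (c * N * m) = 0
        ∨ f.eval (c * N * m) = c}.Finite := by
      have hinj : Function.Injective (fun m : ℤ => c * N * m) :=
        fun a b hab => by
          have hcN : c * N ≠ 0 := mul_ne_zero hc hNpos.ne'
          exact mul_left_cancel₀ hcN hab
      have hfin3 : ({x : ℤ | f.eval x = -c} ∪ ({x : ℤ | f.eval x = 0} ∪ {x : ℤ | f.eval x = c})).Finite :=
        (hroots (-c)).union ((hroots 0).union (hroots c))
      exact (hfin3.preimage hinj.injOn).subset fun m hm => hm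
    obtain ⟨m, hm⟩ := hB.infinite_compl.nonempty
    set t := f.eval (c * N * m) with htdef
    have hdvd : c * N * m ∣ t - c := by
      simpa using sub_dvd_eval_sub (c * N * m) 0 f
    obtain ⟨k, hk⟩ := hdvd
    set e : ℤ := 1 + N * m * k with he
    have ht : t = c * e := by rw [he]; linear_combination hk
    have hme : e ≠ -1 ∧ e ≠ 0 ∧ e ≠ 1 := by
      simp only [Set.mem_compl_iff, Set.mem_setOf_eq, not_or] at hm
      refine ⟨fun h => hm.1 ?_, fun h => hm.2.1 ?_, fun h => hm.2.2 ?_⟩ <;>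
        rw [← htdef, ht, h] <;> ring
    have hena : e.natAbs ≠ 1 := by
      intro h
      rw [Int.natAbs_eq_iff] at h
      push_cast at h
      tauto
    obtain ⟨p, hp, hpe⟩ := Int.exists_prime_and_dvd hena
    set q := p.natAbs with hq
    have hqp : q.Prime := Int.prime_iff_natAbs_prime.mp hp
    have hqmem : q ∈ hfin.toFinset := by
      rw [Set.Finite.mem_toFinset]
      refine ⟨hqp, c * N * m, ?_⟩
      have : (q : ℤ) ∣ e := Int.natAbs_dvd.mpr hpe
      exact this.trans ⟨c, by rw [← htdef, ht]; ring⟩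
    have hpN : p ∣ N := Int.natAbs_dvd.mp (Finset.dvd_prod_of_mem (fun r : ℕ => (r : ℤ)) hqmem)
    have : p ∣ 1 := by
      have h2 : p ∣ N * m * k := (hpN.mul_right _).mul_right _
      have := dvd_sub hpe h2
      simpa [he] using this
    exact hp.not_unit (isUnit_of_dvd_one this)


lemma exists_hom_of_loc {K F : Type*} [Field K] [Field F] {R S : Subalgebra ℤ K}
    (hRS : R ≤ S) (d : ℤ) (hdK : ((d : ℤ) : K) ≠ 0) (hdR : ((d : ℤ) : K) ∈ R)
    (huS : (((d : ℤ) : K))⁻¹ ∈ S)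
    (hT : ∀ z ∈ S, ∃ n : ℕ, ((d : ℤ) : K) ^ n * z ∈ R)
    (χ₀ : ↥R →+* F) (hχ₀ : χ₀ ⟨((d : ℤ) : K), hdR⟩ ≠ 0) :
    Nonempty (↥S →+* F) := by
  set dR : ↥R := ⟨((d : ℤ) : K), hdR⟩ with hdRdef
  letI : Algebra ↥R ↥S := (Subalgebra.inclusion hRS).toRingHom.toAlgebra
  have halg : ∀ r : ↥R, ((algebraMap ↥R ↥S r : ↥S) : K) = (r : K) := fun r => rfl
  have hdRunit : IsUnit (algebraMap ↥R ↥S dR) := by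
    refine isUnit_iff_exists_inv.mpr ⟨⟨_, huS⟩, Subtype.ext ?_⟩
    show ((algebraMap ↥R ↥S dR : ↥S) : K) * (((d : ℤ) : K))⁻¹ = 1
    rw [halg]
    exact mul_inv_cancel₀ hdK
  haveI hloc : IsLocalization (Submonoid.powers dR) ↥S := by
    refine ⟨?_, ?_, ?_⟩
    · rintro ⟨y', k, rfl⟩
      show IsUnit (algebraMap ↥R ↥S (dR ^ k))
      rw [map_pow]
      exact hdRunit.pow k
    · intro z
      obtain ⟨n, hn⟩ := hT z.1 z.2
      refine ⟨(⟨_, hn⟩, ⟨dR ^ n, n, rfl⟩), Subtype.ext ?_⟩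
      show (z : K) * ((algebraMap ↥R ↥S (dR ^ n) : ↥S) : K) = _
      rw [halg]
      show (z : K) * ((dR ^ n : ↥R) : K) = ((d : ℤ) : K) ^ n * z
      rw [SubmonoidClass.coe_pow]
      show (z : K) * (((d : ℤ) : K)) ^ n = _
      ring
    · intro a b h
      exact ⟨1, by rw [Subalgebra.inclusion_injective hRS h]⟩
  have hunits : ∀ y : Submonoid.powers dR, IsUnit (χ₀ y) := by
    rintro ⟨y', k, rfl⟩
    show IsUnit (χ₀ (dR ^ k))
    rw [map_pow]
    exact (Ne.isUnit hχ₀).pow k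
  exact ⟨IsLocalization.lift (M := Submonoid.powers dR) (S := ↥S) hunits⟩

open Polynomial in
lemma key_primes_infinite (A : Type*) [CommRing A] [IsDomain A] [Algebra.FiniteType ℤ A]
    (K : Type*) [Field K] [Algebra A K] [IsFractionRing A K] [NumberField K]
    (g : A) (hg : g ≠ 0) :
    {p : ℕ | p.Prime ∧ ∃ ψ : A →+* ZMod p, Function.Surjective ψ ∧ ψ g ≠ 0}.Infinite := by
  classical
  haveI : @IsScalarTower ℤ ℚ K Algebra.toSMul Algebra.toSMul Algebra.toSMul :=
    IsScalarTower.of_algebraMap_eq fun n => by simp [eq_intCast, eq_ratCast]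
  haveI := (Module.isTorsionFree_iff_algebraMap_injective (R := ℤ) (A := K)).mpr
    (algebraMap ℤ K).injective_int
  obtain ⟨β, hβ⟩ := Field.exists_primitive_element ℚ K
  have hβalg : IsAlgebraic ℤ β :=
    (IsFractionRing.isAlgebraic_iff ℤ ℚ K).mpr (Algebra.IsAlgebraic.isAlgebraic β)
  obtain ⟨y, hy, hxy⟩ := hβalg.exists_integral_multiple
  set α : K := algebraMap ℤ K y * β with hα
  have hαint : IsIntegral ℤ α := by rw [hα, ← Algebra.smul_def]; exact hxy
  have hyK : (algebraMap ℤ K y) ≠ 0 := by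
    rw [eq_intCast]; exact_mod_cast hy
  have hadj : Algebra.adjoin ℚ {α} = ⊤ := by
    have hβint : IsIntegral ℚ β := IsIntegral.of_finite ℚ β
    have h1 : Algebra.adjoin ℚ {β} = ⊤ := by
      have := IntermediateField.adjoin_simple_toSubalgebra_of_isAlgebraic hβint.isAlgebraic
      rw [hβ] at this
      rw [← this, IntermediateField.top_toSubalgebra]
    have hβmem : β ∈ Algebra.adjoin ℚ {α} := by
      have hαmem : α ∈ Algebra.adjoin ℚ {α} := Algebra.self_mem_adjoin_singleton ℚ α
      have h2 : algebraMap ℚ K ((y : ℚ)⁻¹) * α = β := by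
        rw [hα]
        have h5 : algebraMap ℤ K y = algebraMap ℚ K (y : ℚ) := by
          rw [eq_intCast, eq_ratCast]; push_cast; ring
        rw [h5, ← mul_assoc, ← map_mul, inv_mul_cancel₀ (by exact_mod_cast hy), map_one,
          one_mul]
      exact h2 ▸ mul_mem (Subalgebra.algebraMap_mem _ _) hαmem
    rw [eq_top_iff, ← h1]
    exact Algebra.adjoin_le (Set.singleton_subset_iff.mpr hβmem)
  set f : Polynomial ℤ := minpoly ℤ α with hfdef
  have hf1 : 0 < f.natDegree := minpoly.natDegree_pos hαint
  set R : Subalgebra ℤ K := Algebra.adjoin ℤ {α} with hR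
  have hintR : ∀ m : ℤ, ((m : ℤ) : K) ∈ R := fun m => by
    rw [← eq_intCast (algebraMap ℤ K) m]; exact Subalgebra.algebraMap_mem R m
  -- denominators
  have hdenom : ∀ x : K, ∃ m : ℤ, m ≠ 0 ∧ (m : K) * x ∈ R := by
    intro x
    have hx : x ∈ Algebra.adjoin ℚ {α} := by rw [hadj]; exact Algebra.mem_top
    induction hx using Algebra.adjoin_induction with
    | mem z hz =>
      obtain rfl : z = α := hz
      exact ⟨1, one_ne_zero,
        by rw [Int.cast_one, one_mul]; exact Algebra.self_mem_adjoin_singleton ℤ α⟩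
    | algebraMap r =>
      refine ⟨(r.den : ℤ), by exact_mod_cast r.den_nz, ?_⟩
      have hq : (r.den : ℚ) * r = (r.num : ℚ) := by
        rw [mul_comm]; exact_mod_cast Rat.mul_den_eq_num r
      have key : ((r.den : ℤ) : K) * algebraMap ℚ K r = ((r.num : ℤ) : K) := by
        rw [eq_ratCast]
        have h4 := congrArg (fun q : ℚ => (q : K)) hq
        push_cast at h4 ⊢
        exact h4
      rw [key]
      exact hintR r.num
    | add u v hu hv ihu ihv =>
      obtain ⟨m, hm, hmu⟩ := ihu
      obtain ⟨n, hn, hnv⟩ := ihv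
      refine ⟨m * n, mul_ne_zero hm hn, ?_⟩
      have h6 : ((m * n : ℤ) : K) * (u + v)
          = (n : K) * ((m : K) * u) + (m : K) * ((n : K) * v) := by push_cast; ring
      rw [h6]
      exact add_mem (mul_mem (hintR n) hmu) (mul_mem (hintR m) hnv)
    | mul u v hu hv ihu ihv =>
      obtain ⟨m, hm, hmu⟩ := ihu
      obtain ⟨n, hn, hnv⟩ := ihv
      refine ⟨m * n, mul_ne_zero hm hn, ?_⟩
      have h7 : ((m * n : ℤ) : K) * (u * v) = ((m : K) * u) * ((n : K) * v) := by
        push_cast; ring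
      rw [h7]
      exact mul_mem hmu hnv
  -- generators of A and 1/g
  obtain ⟨s, hs⟩ := ‹Algebra.FiniteType ℤ A›.out
  set tset : Finset K := insert ((algebraMap A K g)⁻¹) (s.image (algebraMap A K)) with htset
  choose mf hmf1 hmf2 using hdenom
  set d : ℤ := ∏ x ∈ tset, mf x with hd
  have hd0 : d ≠ 0 := Finset.prod_ne_zero_iff.mpr fun x _ => hmf1 x
  have hdK : ((d : ℤ) : K) ≠ 0 := (Int.cast_ne_zero (α := K)).mpr hd0
  have hdmem : ∀ x ∈ tset, ((d : ℤ) : K) * x ∈ R := by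
    intro x hx
    obtain ⟨d', hd'⟩ := Finset.dvd_prod_of_mem mf hx
    rw [← hd] at hd'
    rw [show ((d : ℤ) : K) * x = (d' : K) * ((mf x : K) * x) by rw [hd']; push_cast; ring]
    exact mul_mem (hintR d') (hmf2 x)
  -- the subalgebra S = R[1/d]
  set u : K := ((d : ℤ) : K)⁻¹ with hu
  set S : Subalgebra ℤ K := Algebra.adjoin ℤ {α, u} with hS
  have hRS : R ≤ S := Algebra.adjoin_mono (by simp)
  have huS : u ∈ S := Algebra.subset_adjoin (by simp)
  have hStoT : ∀ z ∈ S, ∃ n : ℕ, ((d : ℤ) : K) ^ n * z ∈ R := by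
    intro z hz
    induction hz using Algebra.adjoin_induction with
    | mem w hw =>
      rcases Set.mem_insert_iff.mp hw with h | h
      · exact ⟨0, by
          rw [pow_zero, one_mul, h]; exact Algebra.self_mem_adjoin_singleton ℤ α⟩
      · exact ⟨1, by
          rw [pow_one, Set.mem_singleton_iff.mp h, hu, mul_inv_cancel₀ hdK]
          exact one_mem R⟩
    | algebraMap r => exact ⟨0, by rw [pow_zero, one_mul]; exact Subalgebra.algebraMap_mem R r⟩
    | add a b ha hb iha ihb =>
      obtain ⟨n1, h1⟩ := iha
      obtain ⟨n2, h2⟩ := ihb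
      refine ⟨n1 + n2, ?_⟩
      have h8 : ((d : ℤ) : K) ^ (n1 + n2) * (a + b)
          = ((d : ℤ) : K) ^ n2 * (((d : ℤ) : K) ^ n1 * a)
            + ((d : ℤ) : K) ^ n1 * (((d : ℤ) : K) ^ n2 * b) := by ring
      rw [h8]
      exact add_mem (mul_mem (pow_mem (hintR d) n2) h1) (mul_mem (pow_mem (hintR d) n1) h2)
    | mul a b ha hb iha ihb =>
      obtain ⟨n1, h1⟩ := iha
      obtain ⟨n2, h2⟩ := ihb
      refine ⟨n1 + n2, ?_⟩
      have h9 : ((d : ℤ) : K) ^ (n1 + n2) * (a * b)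
          = (((d : ℤ) : K) ^ n1 * a) * (((d : ℤ) : K) ^ n2 * b) := by ring
      rw [h9]
      exact mul_mem h1 h2
  have hTtoS : ∀ z : K, (∃ n : ℕ, ((d : ℤ) : K) ^ n * z ∈ R) → z ∈ S := by
    rintro z ⟨n, hn⟩
    have hz : z = (((d : ℤ) : K) ^ n * z) * u ^ n := by
      rw [hu]
      rw [inv_pow, mul_comm _ z, mul_assoc, mul_inv_cancel₀ (pow_ne_zero n hdK), mul_one]
    rw [hz]
    exact mul_mem (hRS hn) (pow_mem huS n)
  have hAtoS : ∀ a : A, algebraMap A K a ∈ S := by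
    intro a
    have ha : a ∈ Algebra.adjoin ℤ (s : Set A) := by rw [hs]; exact Algebra.mem_top
    induction ha using Algebra.adjoin_induction with
    | mem w hw =>
      refine hTtoS _ ⟨1, ?_⟩
      rw [pow_one]
      exact hdmem _ (Finset.mem_insert_of_mem (Finset.mem_image_of_mem _ hw))
    | algebraMap r =>
      rw [eq_intCast (algebraMap ℤ A) r, map_intCast]
      exact hRS (hintR r)
    | add a b ha hb iha ihb => rw [map_add]; exact add_mem iha ihb
    | mul a b ha hb iha ihb => rw [map_mul]; exact mul_mem iha ihb
  have hgK : algebraMap A K g ≠ 0 := fun h =>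
    hg (IsFractionRing.injective A K (by rw [h, map_zero]))
  have hginv : (algebraMap A K g)⁻¹ ∈ S :=
    hTtoS _ ⟨1, by rw [pow_one]; exact hdmem _ (Finset.mem_insert_self _ _)⟩
  -- Schur primes
  have hsch := schur_infinite f hf1
  have hbad : {p : ℕ | (p : ℤ) ∣ d}.Finite := by
    refine Set.Finite.subset (Set.finite_Iic d.natAbs) fun p hp => ?_
    have h10 : (p : ℤ) ∣ (d.natAbs : ℤ) := (Int.dvd_natAbs).mpr hp
    exact Nat.le_of_dvd (Int.natAbs_pos.mpr hd0) (Int.ofNat_dvd.mp h10)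
  refine (hsch.diff hbad).mono ?_
  rintro p ⟨⟨hp, n, hpn⟩, hpd⟩
  simp only [Set.mem_setOf_eq] at hpd ⊢
  haveI : Fact p.Prime := ⟨hp⟩
  refine ⟨hp, ?_⟩
  have hr : f.eval₂ (Int.castRingHom (ZMod p)) ((n : ZMod p)) = 0 := by
    rw [show ((n : ZMod p)) = (Int.castRingHom (ZMod p)) n from rfl,
      Polynomial.eval₂_at_apply]
    exact (ZMod.intCast_zmod_eq_zero_iff_dvd _ p).mpr hpn
  set χ₁ : AdjoinRoot f →+* ZMod p :=
    AdjoinRoot.lift (Int.castRingHom (ZMod p)) (n : ZMod p) hr with hχ₁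
  set χ₀ : ↥R →+* ZMod p :=
    χ₁.comp (minpoly.equivAdjoin hαint).symm.toAlgHom.toRingHom with hχ₀
  have hχ₀d : χ₀ ⟨((d : ℤ) : K), hintR d⟩ = ((d : ℤ) : ZMod p) := by
    have h11 : (⟨((d : ℤ) : K), hintR d⟩ : ↥R) = ((d : ℤ) : ↥R) :=
      Subtype.ext (by push_cast; rfl)
    rw [h11, map_intCast]
  have hdp : ((d : ℤ) : ZMod p) ≠ 0 := fun h =>
    hpd ((ZMod.intCast_zmod_eq_zero_iff_dvd d p).mp h)
  obtain ⟨χ⟩ := exists_hom_of_loc hRS d hdK (hintR d) (hu ▸ huS) hStoT χ₀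
    (by rw [hχ₀d]; exact hdp)
  set ρ : A →+* ↥S :=
    { toFun := fun a => ⟨algebraMap A K a, hAtoS a⟩
      map_one' := Subtype.ext (map_one _)
      map_mul' := fun a b => Subtype.ext (map_mul _ a b)
      map_zero' := Subtype.ext (map_zero _)
      map_add' := fun a b => Subtype.ext (map_add _ a b) } with hρ
  refine ⟨χ.comp ρ, ?_, ?_⟩
  · intro z
    obtain ⟨n', rfl⟩ := ZMod.intCast_surjective z
    exact ⟨(n' : A), map_intCast (χ.comp ρ) n'⟩
  · have hunit : IsUnit (ρ g) := by
      refine isUnit_iff_exists_inv.mpr ⟨⟨(algebraMap A K g)⁻¹, hginv⟩, Subtype.ext ?_⟩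
      show algebraMap A K g * (algebraMap A K g)⁻¹ = 1
      exact mul_inv_cancel₀ hgK
    simpa using (hunit.map χ).ne_zero

/-- Let `A` be an integral domain, finitely generated as a `ℤ`-algebra, whose
fraction field is a number field. Then the set of primes `𝔭` of `A` with `A ⧸ 𝔭` a finite
field of prime cardinality is infinite, and dense in `PrimeSpectrum A`. -/
theorem infinite_dense_primeField_primes
    (A : Type*) [CommRing A] [IsDomain A] [Algebra.FiniteType ℤ A]
    [NumberField (FractionRing A)] :
    {𝔭 : PrimeSpectrum A | ∃ p : ℕ, p.Prime ∧
        Nonempty ((A ⧸ 𝔭.asIdeal) ≃+* ZMod p)}.Infinite ∧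
      Dense {𝔭 : PrimeSpectrum A | ∃ p : ℕ, p.Prime ∧
        Nonempty ((A ⧸ 𝔭.asIdeal) ≃+* ZMod p)} := by
  classical
  constructor
  · have hS₁ := key_primes_infinite A (FractionRing A) 1 one_ne_zero
    haveI := hS₁.to_subtype
    have main : ∀ q : {p : ℕ | p.Prime ∧ ∃ ψ : A →+* ZMod p,
        Function.Surjective ψ ∧ ψ 1 ≠ 0},
        ∃ 𝔭 : PrimeSpectrum A, Nonempty ((A ⧸ 𝔭.asIdeal) ≃+* ZMod (q : ℕ)) := by
      rintro ⟨p, hp, ψ, hsurj, -⟩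
      haveI : Fact p.Prime := ⟨hp⟩
      exact ⟨⟨RingHom.ker ψ, RingHom.ker_isPrime ψ⟩,
        ⟨RingHom.quotientKerEquivOfSurjective hsurj⟩⟩
    choose F hF using main
    refine Set.infinite_of_injective_forall_mem (f := F) ?_ ?_
    · intro a b hab
      obtain ⟨ea⟩ := hF a
      obtain ⟨eb⟩ := hF b
      rw [hab] at ea
      haveI : NeZero (a : ℕ) := ⟨a.2.1.ne_zero⟩
      haveI : NeZero (b : ℕ) := ⟨b.2.1.ne_zero⟩
      have e : ZMod (b : ℕ) ≃+* ZMod (a : ℕ) := eb.symm.trans ea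
      have hcard := Fintype.card_congr e.toEquiv
      rw [ZMod.card, ZMod.card] at hcard
      exact Subtype.ext hcard.symm
    · intro q
      exact ⟨(q : ℕ), q.2.1, hF q⟩
  · rw [dense_iff_inter_open]
    rintro U hU ⟨𝔮, h𝔮U⟩
    obtain ⟨V, hV, h𝔮V, hVU⟩ :=
      PrimeSpectrum.isTopologicalBasis_basic_opens.exists_subset_of_mem_open h𝔮U hU
    obtain ⟨g, rfl⟩ := hV
    have hg : g ≠ 0 := by
      intro h
      simp only [SetLike.mem_coe, PrimeSpectrum.mem_basicOpen] at h𝔮V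
      exact h𝔮V (h ▸ 𝔮.asIdeal.zero_mem)
    obtain ⟨p, hp, ψ, hsurj, hψg⟩ :=
      (key_primes_infinite A (FractionRing A) g hg).nonempty
    haveI : Fact p.Prime := ⟨hp⟩
    refine ⟨⟨RingHom.ker ψ, RingHom.ker_isPrime ψ⟩, hVU ?_, p, hp,
      ⟨RingHom.quotientKerEquivOfSurjective hsurj⟩⟩
    simp only [SetLike.mem_coe, PrimeSpectrum.mem_basicOpen]
    exact fun h => hψg (RingHom.mem_ker.mp h)
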